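/- Suppose κ is a cardinal such that for every function f : κ → κ there exist an ordinal λ > κ, a transitive set M with V_λ ⊆ M, and an elementary embedding j : V_λ → M (existing possibly in a forcing extension, but for this statement assume j exists in V) with critical point κ. Then κ is ineffable: for every sequence ⟨A_α : α < κ⟩ with A_α ⊆ α for all α < κ, there is a set A ⊆ κ such that { α < κ : A ∩ α = A_α } is stationary in κ. -/

import Mathlib

open FirstOrder

/-- The language of set theory: one binary relation `∈`. -/
inductive memRelSym : ℕ → Type
  | mem : memRelSym 2

/-- The language of set theory. -/
def memLang : Language := ⟨fun _ => Empty, memRelSym⟩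

/-- Any class of sets (subclass of the von Neumann universe, here modelled by `ZFSet`)
is a structure in the language of set theory, interpreted by true membership. -/
instance memStructure (S : Set ZFSet) : memLang.Structure S where
  funMap := fun e _ => e.elim
  RelMap := fun r x => match r with
    | memRelSym.mem => ((x 0) : ZFSet) ∈ ((x 1) : ZFSet)

/-- The rank initial segment `V_λ` of the universe, as a class of `ZFSet`s. -/
def Vo (l : Ordinal) : Set ZFSet := {x | x.rank < l}

/-- `C` is club in an ordinal `κ`: unbounded in `κ` and closed under limits below `κ`. -/
def IsClubIn (C : Set Ordinal) (k : Ordinal) : Prop :=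
  (∀ a < k, ∃ b ∈ C, a ≤ b ∧ b < k) ∧
  (∀ a < k, 0 < a → (∀ b < a, ∃ c ∈ C, b ≤ c ∧ c < a) → a ∈ C)

/-- `S` is stationary in `κ`: it meets every club subset of `κ`. -/
def IsStationaryIn (S : Set Ordinal) (k : Ordinal) : Prop :=
  ∀ C : Set Ordinal, IsClubIn C k → (S ∩ C).Nonempty


/-! ### Auxiliary material -/

set_option maxHeartbeats 1600000

universe u

open FirstOrder Language BoundedFormula Order

/-- von Neumann ordinal corresponding to an `Ordinal`. -/
noncomputable def vn (b : Ordinal.{u}) : ZFSet.{u} :=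
  ZFSet.range (fun i : b.ToType => vn ((Ordinal.ToType.mk (o := b)).symm i).1)
termination_by b
decreasing_by exact ((Ordinal.ToType.mk (o := b)).symm i).2

theorem mem_vn {x : ZFSet.{u}} {b : Ordinal.{u}} : x ∈ vn b ↔ ∃ g < b, x = vn g := by
  rw [vn, ZFSet.mem_range]
  constructor
  · rintro ⟨i, rfl⟩
    exact ⟨_, ((Ordinal.ToType.mk (o := b)).symm i).2, rfl⟩
  · rintro ⟨g, hg, rfl⟩
    exact ⟨(Ordinal.ToType.mk (o := b)) ⟨g, hg⟩, by simp⟩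

theorem vn_mem_vn {g b : Ordinal.{u}} (h : g < b) : vn g ∈ vn b :=
  mem_vn.2 ⟨g, h, rfl⟩

theorem rank_vn (b : Ordinal.{u}) : (vn b).rank = b := by
  induction b using Ordinal.induction with
  | _ b IH =>
    apply le_antisymm
    · rw [ZFSet.rank_le_iff]
      intro y hy
      obtain ⟨g, hg, rfl⟩ := mem_vn.1 hy
      rwa [IH g hg]
    · by_contra h
      push_neg at h
      have h2 : (vn ((vn b).rank)).rank < (vn b).rank := ZFSet.rank_lt_of_mem (vn_mem_vn h)
      rw [IH _ h] at h2
      exact lt_irrefl _ h2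

theorem vn_injective : Function.Injective vn := fun a b h => by
  rw [← rank_vn a, ← rank_vn b, h]

theorem vn_mem_vn_iff {g b : Ordinal.{u}} : vn g ∈ vn b ↔ g < b := by
  refine ⟨fun h => ?_, vn_mem_vn⟩
  have := ZFSet.rank_lt_of_mem h
  rwa [rank_vn, rank_vn] at this

theorem isOrdinal_vn (b : Ordinal.{u}) : (vn b).IsOrdinal := by
  constructor
  · intro y hy z hz
    obtain ⟨g, hg, rfl⟩ := mem_vn.1 hy
    obtain ⟨d, hd, rfl⟩ := mem_vn.1 hz
    exact vn_mem_vn (hd.trans hg)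
  · intro y z w hyz hzw hwb
    obtain ⟨g, hg, rfl⟩ := mem_vn.1 hwb
    obtain ⟨d, hd, rfl⟩ := mem_vn.1 hzw
    obtain ⟨e, he, rfl⟩ := mem_vn.1 hyz
    exact vn_mem_vn (he.trans hd)

theorem mem_isOrdinal {x y : ZFSet.{u}} (hx : x.IsOrdinal) (hy : y ∈ x) :
    y.IsOrdinal := by
  constructor
  · intro a ha b hb
    exact hx.mem_trans' hb ha hy
  · intro a b c hab hbc hcy
    exact hx.mem_trans' hab hbc (hx.isTransitive.mem_trans hcy hy)

theorem eq_vn_rank {x : ZFSet.{u}} (hx : x.IsOrdinal) : x = vn x.rank := by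
  induction x using ZFSet.inductionOn with
  | _ x IH =>
    ext z
    rw [mem_vn]
    constructor
    · intro hz
      exact ⟨z.rank, ZFSet.rank_lt_of_mem hz, IH z hz (mem_isOrdinal hx hz)⟩
    · rintro ⟨g, hg, rfl⟩
      obtain ⟨y, hy, hgy⟩ := ZFSet.lt_rank_iff.1 hg
      have hyo := mem_isOrdinal hx hy
      have hyvn := IH y hy hyo
      rcases eq_or_lt_of_le hgy with h | h
      · rw [← h] at hyvn; rwa [← hyvn]
      · have : vn g ∈ y := by rw [hyvn]; exact vn_mem_vn h
        exact hx.isTransitive.mem_trans this hy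

/-- The code of a set of ordinals, as a subset of `vn k`. -/
noncomputable def codeSet (T : Set Ordinal.{u}) (k : Ordinal.{u}) : ZFSet.{u} :=
  ZFSet.sep (fun x => ∃ b ∈ T, x = vn b) (vn k)

theorem mem_codeSet {T : Set Ordinal.{u}} {k : Ordinal.{u}} {x : ZFSet.{u}} :
    x ∈ codeSet T k ↔ ∃ b ∈ T, b < k ∧ x = vn b := by
  rw [codeSet, ZFSet.mem_sep]
  constructor
  · rintro ⟨hx, b, hbT, rfl⟩
    exact ⟨b, hbT, vn_mem_vn_iff.1 hx, rfl⟩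
  · rintro ⟨b, hbT, hbk, rfl⟩
    exact ⟨vn_mem_vn hbk, b, hbT, rfl⟩

theorem vn_mem_codeSet {T : Set Ordinal.{u}} {k b : Ordinal.{u}} :
    vn b ∈ codeSet T k ↔ b ∈ T ∧ b < k := by
  rw [mem_codeSet]
  constructor
  · rintro ⟨c, hcT, hck, hc⟩
    obtain rfl := vn_injective hc
    exact ⟨hcT, hck⟩
  · rintro ⟨hbT, hbk⟩
    exact ⟨b, hbT, hbk, rfl⟩

theorem codeSet_subset {T : Set Ordinal.{u}} {k : Ordinal.{u}} :
    ∀ x ∈ codeSet T k, x ∈ vn k := by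
  intro x hx
  obtain ⟨b, _, hbk, rfl⟩ := mem_codeSet.1 hx
  exact vn_mem_vn hbk

theorem rank_codeSet_le {T : Set Ordinal.{u}} {k : Ordinal.{u}} :
    (codeSet T k).rank ≤ k := by
  have := ZFSet.rank_mono (x := codeSet T k) (y := vn k) (fun z hz => codeSet_subset z hz)
  rwa [rank_vn] at this

theorem mem_zpair {x y z : ZFSet.{u}} :
    z ∈ ZFSet.pair x y ↔ z = {x} ∨ z = {x, y} := by
  show z ∈ ({{x}, {x, y}} : ZFSet) ↔ _
  exact ZFSet.mem_pair

theorem rank_pair_lt {x y : ZFSet.{u}} {k : Ordinal.{u}} (hk : ∀ a < k, a + 1 < k)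
    (hx : x.rank < k) (hy : y.rank < k) : (ZFSet.pair x y).rank < k := by
  have hm : max x.rank y.rank < k := max_lt hx hy
  have h2 : max x.rank y.rank + 1 + 1 < k := hk _ (hk _ hm)
  refine lt_of_le_of_lt ?_ h2
  rw [ZFSet.rank_le_iff]
  intro z hz
  have hz1 : z.rank ≤ max x.rank y.rank + 1 := by
    rw [ZFSet.rank_le_iff]
    intro w hw
    rcases mem_zpair.1 hz with rfl | rfl
    · rw [ZFSet.mem_singleton] at hw
      subst hw
      exact lt_of_le_of_lt (le_max_left _ _) (by rw [Ordinal.add_one_eq_succ]; exact lt_succ _)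
    · rcases ZFSet.mem_pair.1 hw with rfl | rfl
      · exact lt_of_le_of_lt (le_max_left _ _) (by rw [Ordinal.add_one_eq_succ]; exact lt_succ _)
      · exact lt_of_le_of_lt (le_max_right _ _) (by rw [Ordinal.add_one_eq_succ]; exact lt_succ _)
  exact lt_of_le_of_lt hz1 (by rw [Ordinal.add_one_eq_succ]; exact lt_succ _)

/-- Code of the sequence `A`, restricted below `k`. -/
noncomputable def seqCode (A : Ordinal.{u} → Set Ordinal.{u}) (k : Ordinal.{u}) : ZFSet.{u} :=
  ZFSet.range (fun i : k.ToType =>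
    ZFSet.pair (vn ((Ordinal.ToType.mk (o := k)).symm i).1)
      (codeSet (A ((Ordinal.ToType.mk (o := k)).symm i).1) ((Ordinal.ToType.mk (o := k)).symm i).1))

theorem mem_seqCode {A : Ordinal.{u} → Set Ordinal.{u}} {k : Ordinal.{u}} {x : ZFSet.{u}} :
    x ∈ seqCode A k ↔ ∃ a < k, x = ZFSet.pair (vn a) (codeSet (A a) a) := by
  rw [seqCode, ZFSet.mem_range]
  constructor
  · rintro ⟨i, rfl⟩
    exact ⟨_, ((Ordinal.ToType.mk (o := k)).symm i).2, rfl⟩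
  · rintro ⟨a, ha, rfl⟩
    exact ⟨(Ordinal.ToType.mk (o := k)) ⟨a, ha⟩, by simp⟩

theorem pair_eq_of_chars {S : Set ZFSet.{u}}
    (hS : ∀ {x y : ZFSet.{u}}, x ∈ S → y ∈ x → y ∈ S)
    {p x y q1 q2 : ZFSet.{u}} (hxS : x ∈ S) (hyS : y ∈ S)
    (hq1p : q1 ∈ p) (hq1S : q1 ∈ S) (hq1 : ∀ r ∈ S, (r ∈ q1 ↔ r = x))
    (hq2p : q2 ∈ p) (hq2S : q2 ∈ S) (hq2 : ∀ r ∈ S, (r ∈ q2 ↔ (r = x ∨ r = y)))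
    (hall : ∀ q ∈ S, q ∈ p →
      (∀ r ∈ S, (r ∈ q ↔ r = x)) ∨ (∀ r ∈ S, (r ∈ q ↔ (r = x ∨ r = y))))
    (hpS : p ∈ S) :
    p = ZFSet.pair x y := by
  have sub1 : ∀ q ∈ S, (∀ r ∈ S, (r ∈ q ↔ r = x)) → q = ({x} : ZFSet) := by
    intro q hqS hq
    apply ZFSet.ext
    intro r
    rw [ZFSet.mem_singleton]
    constructor
    · intro hr
      exact (hq r (hS hqS hr)).1 hr
    · intro hr
      rw [hr]
      exact (hq x hxS).2 rfl
  have sub2 : ∀ q ∈ S, (∀ r ∈ S, (r ∈ q ↔ (r = x ∨ r = y))) → q = ({x, y} : ZFSet) := by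
    intro q hqS hq
    apply ZFSet.ext
    intro r
    rw [ZFSet.mem_pair]
    constructor
    · intro hr
      exact (hq r (hS hqS hr)).1 hr
    · intro hr
      rcases hr with hr | hr <;> rw [hr]
      · exact (hq x hxS).2 (Or.inl rfl)
      · exact (hq y hyS).2 (Or.inr rfl)
  have hq1e := sub1 q1 hq1S hq1
  have hq2e := sub2 q2 hq2S hq2
  apply ZFSet.ext
  intro z
  rw [mem_zpair]
  constructor
  · intro hz
    rcases hall z (hS hpS hz) hz with h | h
    · exact Or.inl (sub1 z (hS hpS hz) h)
    · exact Or.inr (sub2 z (hS hpS hz) h)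
  · rintro (rfl | rfl)
    · rw [← hq1e]; exact hq1p
    · rw [← hq2e]; exact hq2p

/-! ### First-order formulas in the language of set theory -/

/-- The atomic membership formula. -/
def memF {α : Type} {n : ℕ} (t1 t2 : memLang.Term (α ⊕ Fin n)) : memLang.BoundedFormula α n :=
  Relations.boundedFormula₂ memRelSym.mem t1 t2

@[simp] lemma realize_memF {S : Set ZFSet.{u}} {α : Type} {n : ℕ}
    {t1 t2 : memLang.Term (α ⊕ Fin n)} {v : α → S} {xs : Fin n → S} :
    (memF t1 t2).Realize v xs ↔
      ((t1.realize (Sum.elim v xs) : S) : ZFSet) ∈ ((t2.realize (Sum.elim v xs) : S) : ZFSet) := by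
  rw [memF]
  exact BoundedFormula.realize_rel₂

/-- The free variable term. -/
def fv {α : Type} {n : ℕ} (a : α) : memLang.Term (α ⊕ Fin n) := Language.Term.var (Sum.inl a)

/-- `v0 ∈ v1`. -/
def memFm : memLang.Formula (Fin 2) := memF (fv 0) (fv 1)

@[simp] lemma realize_memFm {S : Set ZFSet.{u}} (x y : S) :
    memFm.Realize (M := S) ![x, y] ↔ (x : ZFSet) ∈ (y : ZFSet) := by
  simp [memFm, Formula.Realize, fv]

/-- `v0` is empty. -/
def emptyFm : memLang.Formula (Fin 1) := ∼(∃' memF &0 (fv 0))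

@[simp] lemma realize_emptyFm {S : Set ZFSet.{u}} (x : S) :
    emptyFm.Realize (M := S) ![x] ↔ ¬ ∃ b : S, (b : ZFSet) ∈ (x : ZFSet) := by
  simp [emptyFm, Formula.Realize, fv, Fin.snoc]

/-- `v1 = v0 ∪ {v0}`. -/
def succFm : memLang.Formula (Fin 2) :=
  ∀' (memF &0 (fv 1) ⇔ (memF &0 (fv 0) ⊔ (&0 =' (fv 0))))

@[simp] lemma realize_succFm {S : Set ZFSet.{u}} (x y : S) :
    succFm.Realize (M := S) ![x, y] ↔
      ∀ z : S, ((z : ZFSet) ∈ (y : ZFSet) ↔ ((z : ZFSet) ∈ (x : ZFSet) ∨ z = x)) := by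
  simp [succFm, Formula.Realize, fv, Fin.snoc]

/-- `v0` is transitive, and membership is transitive on members of `v0`. -/
def ordFm : memLang.Formula (Fin 1) :=
  (∀' (memF &0 (fv 0) ⟹ ∀' (memF &1 &0 ⟹ memF &1 (fv 0)))) ⊓
  (∀' (memF &0 (fv 0) ⟹ ∀' (memF &1 &0 ⟹ ∀' (memF &2 &1 ⟹ memF &2 &0))))

@[simp] lemma realize_ordFm {S : Set ZFSet.{u}} (x : S) :
    ordFm.Realize (M := S) ![x] ↔
      ((∀ w : S, (w : ZFSet) ∈ (x : ZFSet) → ∀ z : S, (z : ZFSet) ∈ (w : ZFSet) →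
        (z : ZFSet) ∈ (x : ZFSet)) ∧
      (∀ w : S, (w : ZFSet) ∈ (x : ZFSet) → ∀ z : S, (z : ZFSet) ∈ (w : ZFSet) →
        ∀ y : S, (y : ZFSet) ∈ (z : ZFSet) → (y : ZFSet) ∈ (w : ZFSet))) := by
  simp [ordFm, Formula.Realize, fv, Fin.snoc]

/-- `v0` is closed below `v1`. -/
def clubFm : memLang.Formula (Fin 2) :=
  ∀' (memF &0 (fv 1) ⟹ (∃' memF &1 &0) ⟹
    (∀' (memF &1 &0 ⟹ ∃' (memF &2 (fv 0) ⊓ memF &2 &0 ⊓ (memF &1 &2 ⊔ (&1 =' &2))))) ⟹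
    memF &0 (fv 0))

@[simp] lemma realize_clubFm {S : Set ZFSet.{u}} (c k : S) :
    clubFm.Realize (M := S) ![c, k] ↔
      ∀ a ∈ S, a ∈ (k : ZFSet) → ∀ x ∈ S, x ∈ a →
        (∀ b ∈ S, b ∈ a →
          ∃ e, (e ∈ (c : ZFSet) ∧ e ∈ a) ∧ e ∈ S ∧ (b ∈ e ∨ b = e)) →
        a ∈ (c : ZFSet) := by
  simp (config := { decide := true }) [clubFm, Formula.Realize, fv, Fin.snoc]

/-- `&2 = pair (&0, &1)`, as a bounded formula with 3 bound variables. -/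
def pairB {α : Type} : memLang.BoundedFormula α 3 :=
  (∃' (memF &3 &2 ⊓ ∀' (memF &4 &3 ⇔ (&4 =' &0)))) ⊓
  (∃' (memF &3 &2 ⊓ ∀' (memF &4 &3 ⇔ ((&4 =' &0) ⊔ (&4 =' &1))))) ⊓
  (∀' (memF &3 &2 ⟹
    ((∀' (memF &4 &3 ⇔ (&4 =' &0))) ⊔ (∀' (memF &4 &3 ⇔ ((&4 =' &0) ⊔ (&4 =' &1)))))))

/-- The sequence `v0` has a value at each element of `v1`, and the values are subsets. -/
def seqFm : memLang.Formula (Fin 2) :=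
  ∀' (memF &0 (fv 1) ⟹ ∃' ∃' (memF &2 (fv 0) ⊓ pairB ⊓ ∀' (memF &3 &1 ⟹ memF &3 &0)))

@[simp] lemma realize_seqFm {S : Set ZFSet.{u}} (sq k : S) :
    seqFm.Realize (M := S) ![sq, k] ↔
      ∀ a ∈ S, a ∈ (k : ZFSet) →
        ∃ y, (∃ p ∈ (sq : ZFSet),
            ((∃ q ∈ p, q ∈ S ∧ ∀ r ∈ S, (r ∈ q ↔ r = a)) ∧
              ∃ q ∈ p, q ∈ S ∧ ∀ r ∈ S, (r ∈ q ↔ r = a ∨ r = y)) ∧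
            p ∈ S ∧
              ∀ q ∈ S, q ∈ p →
                (∀ r ∈ S, (r ∈ q ↔ r = a)) ∨ ∀ r ∈ S, (r ∈ q ↔ r = a ∨ r = y)) ∧
          y ∈ S ∧ ∀ z ∈ S, z ∈ y → z ∈ a := by
  simp (config := { decide := true }) [seqFm, pairB, Formula.Realize, fv, Fin.snoc]

/-- `v0 = {x ∈ v4 ∩ v1 : v2(x) = v3 ∩ x}` (one inclusion). -/
def thetaFm : memLang.Formula (Fin 5) :=
  ∀' ((memF &0 (fv 4) ⊓ memF &0 (fv 1) ⊓
      ∃' ∃' (memF &2 (fv 2) ⊓ pairB ⊓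
        ∀' (memF &3 &1 ⇔ (memF &3 (fv 3) ⊓ memF &3 &0)))) ⟹ memF &0 (fv 0))

@[simp] lemma realize_thetaFm {S : Set ZFSet.{u}} (d c sq s k : S) :
    thetaFm.Realize (M := S) ![d, c, sq, s, k] ↔
      ∀ a ∈ S, a ∈ (k : ZFSet) → a ∈ (c : ZFSet) →
        ∀ (y p : ZFSet), p ∈ (sq : ZFSet) →
          ∀ q1 ∈ p, q1 ∈ S → (∀ r ∈ S, (r ∈ q1 ↔ r = a)) →
            ∀ q2 ∈ p, q2 ∈ S → (∀ r ∈ S, (r ∈ q2 ↔ r = a ∨ r = y)) →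
              p ∈ S →
                (∀ q ∈ S, q ∈ p →
                  (∀ r ∈ S, (r ∈ q ↔ r = a)) ∨ ∀ r ∈ S, (r ∈ q ↔ r = a ∨ r = y)) →
                  y ∈ S → (∀ z ∈ S, (z ∈ y ↔ z ∈ (s : ZFSet) ∧ z ∈ a)) →
                    a ∈ (d : ZFSet) := by
  simp (config := { decide := true }) [thetaFm, pairB, Formula.Realize, fv, Fin.snoc]

/-- `v0` is nonempty. -/
def neFm : memLang.Formula (Fin 1) := ∃' memF &0 (fv 0)

@[simp] lemma realize_neFm {S : Set ZFSet.{u}} (x : S) :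
    neFm.Realize (M := S) ![x] ↔ ∃ b : S, (b : ZFSet) ∈ (x : ZFSet) := by
  simp [neFm, Formula.Realize, fv, Fin.snoc]

/-- If `κ` is a cardinal such that for every `f : κ → κ` there are `λ > κ`, a transitive
set `M` with `V_λ ⊆ M` and an elementary embedding `j : V_λ → M` with critical point `κ`
(here assumed to exist in `V`), then `κ` is ineffable: for every sequence
`⟨A_α : α < κ⟩` with `A_α ⊆ α` there is `A ⊆ κ` with `{α : A ∩ α = A_α}` stationary. -/
theorem stmt_4 (κ : Cardinal)
    (H : ∀ f : Ordinal → Ordinal, (∀ a < κ.ord, f a < κ.ord) →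
      ∃ (l : Ordinal) (M : ZFSet), κ.ord < l ∧ M.IsTransitive ∧
        (∀ x : ZFSet, x.rank < l → x ∈ M) ∧
        ∃ j : (Vo l) ↪ₑ[memLang] (M.toSet),
          (∀ (o : ZFSet) (ho : o ∈ Vo l), o.IsOrdinal → o.rank < κ.ord →
            ((j ⟨o, ho⟩ : M.toSet) : ZFSet) = o) ∧
          (∃ (o : ZFSet) (ho : o ∈ Vo l), o.IsOrdinal ∧ o.rank = κ.ord ∧
            ((j ⟨o, ho⟩ : M.toSet) : ZFSet) ≠ o))
    (A : Ordinal → Set Ordinal) (hA : ∀ a < κ.ord, A a ⊆ Set.Iio a) :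
    ∃ S ⊆ Set.Iio κ.ord,
      IsStationaryIn {a : Ordinal | a < κ.ord ∧ S ∩ Set.Iio a = A a} κ.ord := by
  obtain ⟨l, M, hl, hMt, hVs, j, hfix, o, ho, hoOrd, horank, hmove⟩ := H id (fun a ha => ha)
  -- basic transitivity facts
  have hVo : ∀ {x : ZFSet}, x ∈ Vo l ↔ x.rank < l := Iff.rfl
  have hVtrans : ∀ {x y : ZFSet}, x ∈ Vo l → y ∈ x → y ∈ Vo l :=
    fun hx hyx => hVo.2 (lt_trans (ZFSet.rank_lt_of_mem hyx) (hVo.1 hx))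
  have hMS : ∀ {x : ZFSet}, x ∈ M.toSet ↔ x ∈ M := fun {x} => Iff.rfl
  have hMtrans : ∀ {x y : ZFSet}, x ∈ M.toSet → y ∈ x → y ∈ M.toSet :=
    fun hx hyx => hMS.2 (hMt _ (hMS.1 hx) hyx)
  have hvl : ∀ {b : Ordinal}, b < l → vn b ∈ Vo l := fun {b} hb => by
    refine hVo.2 ?_; rw [rank_vn]; exact hb
  have hvM : ∀ {b : Ordinal}, b < l → vn b ∈ M.toSet := fun {b} hb =>
    hMS.2 (hVs _ (by rw [rank_vn]; exact hb))
  -- the critical point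
  have hKl : vn κ.ord ∈ Vo l := hvl hl
  let Khat : (Vo l : Set ZFSet) := ⟨vn κ.ord, hKl⟩
  have o_eq : o = vn κ.ord := by
    have h := eq_vn_rank hoOrd
    rwa [horank] at h
  have hmoveK : ((j Khat : M.toSet) : ZFSet) ≠ vn κ.ord := by
    have he : (⟨o, ho⟩ : Vo l) = Khat := Subtype.ext o_eq
    rw [he] at hmove
    rwa [← o_eq]
  -- fixed points of j
  have hfix' : ∀ (b : Ordinal) (hb : b < κ.ord),
      ((j ⟨vn b, hvl (hb.trans hl)⟩ : M.toSet) : ZFSet) = vn b := fun b hb =>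
    hfix (vn b) _ (isOrdinal_vn b) (by rw [rank_vn]; exact hb)
  -- membership transfer
  have hmem_t : ∀ (x y : Vo l), ((x : ZFSet) ∈ (y : ZFSet)) ↔
      ((j x : M.toSet) : ZFSet) ∈ ((j y : M.toSet) : ZFSet) := by
    intro x y
    have h := j.map_formula memFm ![x, y]
    rw [show j ∘ ![x, y] = ![j x, j y] from by funext i; fin_cases i <;> rfl] at h
    rw [realize_memFm, realize_memFm] at h
    exact h.symm
  have hjfix : ∀ (b : Ordinal) (hb : b < κ.ord) (x : Vo l),
      (vn b ∈ (x : ZFSet)) ↔ vn b ∈ ((j x : M.toSet) : ZFSet) := by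
    intro b hb x
    have h := hmem_t ⟨vn b, hvl (hb.trans hl)⟩ x
    rwa [hfix' b hb] at h
  -- κ.ord is positive
  have hk0 : 0 < κ.ord := by
    by_contra h
    push_neg at h
    have hk0' : κ.ord = 0 := le_antisymm h (zero_le (a := κ.ord))
    have hKempty : vn κ.ord = ∅ := by
      rw [ZFSet.eq_empty]
      intro y hy
      obtain ⟨g, hg, _⟩ := mem_vn.1 hy
      rw [hk0'] at hg
      exact absurd hg (not_lt_of_ge (zero_le (a := g)))
    have h1 : emptyFm.Realize (M := (Vo l : Set ZFSet)) ![Khat] := by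
      rw [realize_emptyFm]
      rintro ⟨b, hb⟩
      rw [show ((Khat : ZFSet)) = ∅ from hKempty] at hb
      exact ZFSet.notMem_empty _ hb
    have h2 := (j.map_formula emptyFm ![Khat]).mpr h1
    rw [show j ∘ ![Khat] = ![j Khat] from by funext i; fin_cases i <;> rfl,
      realize_emptyFm] at h2
    apply hmoveK
    rw [hKempty, ZFSet.eq_empty]
    intro y hy
    exact h2 ⟨⟨y, hMtrans (j Khat).2 hy⟩, hy⟩
  -- κ.ord is not a successor
  have hksucc : ∀ a < κ.ord, a + 1 < κ.ord := by
    intro a ha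
    rcases lt_or_eq_of_le (Order.succ_le_of_lt ha) with h | h
    · rwa [Ordinal.add_one_eq_succ]
    · exfalso
      have ha' : a < κ.ord := ha
      have hal : a < l := ha'.trans hl
      have h1 : succFm.Realize (M := (Vo l : Set ZFSet)) ![⟨vn a, hvl hal⟩, Khat] := by
        rw [realize_succFm]
        intro z
        constructor
        · intro hz
          obtain ⟨g, hg, he⟩ := mem_vn.1 hz
          rw [← h, Order.lt_succ_iff] at hg
          rcases lt_or_eq_of_le hg with h' | h'
          · exact Or.inl (by rw [he]; exact vn_mem_vn h')
          · exact Or.inr (Subtype.ext (by rw [he, h']))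
        · rintro (hz | hz)
          · obtain ⟨g, hg, he⟩ := mem_vn.1 hz
            rw [he]
            exact vn_mem_vn (hg.trans ha')
          · rw [Subtype.ext_iff] at hz
            rw [show (z : ZFSet) = vn a from hz]
            exact vn_mem_vn ha'
      have h2 := (j.map_formula succFm ![⟨vn a, hvl hal⟩, Khat]).mpr h1
      rw [show j ∘ ![(⟨vn a, hvl hal⟩ : Vo l), Khat] = ![j ⟨vn a, hvl hal⟩, j Khat] from by
        funext i; fin_cases i <;> rfl, realize_succFm] at h2
      apply hmoveK
      apply ZFSet.ext
      intro z
      constructor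
      · intro hz
        have hzM : z ∈ M.toSet := hMtrans (j Khat).2 hz
        rcases (h2 ⟨z, hzM⟩).1 hz with h' | h'
        · rw [hfix' a ha'] at h'
          obtain ⟨g, hg, rfl⟩ := mem_vn.1 h'
          exact vn_mem_vn (hg.trans ha')
        · rw [Subtype.ext_iff] at h'
          rw [show z = vn a from h'.trans (hfix' a ha')]
          exact vn_mem_vn ha'
      · intro hz
        obtain ⟨g, hg, rfl⟩ := mem_vn.1 hz
        rw [← h, Order.lt_succ_iff] at hg
        rcases lt_or_eq_of_le hg with h' | h'
        · refine (h2 ⟨vn g, hvM ((h'.trans ha').trans hl)⟩).2 ?_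
          exact Or.inl (by rw [hfix' a ha']; exact vn_mem_vn h')
        · refine (h2 ⟨vn g, hvM ((hg.trans_lt ha').trans_le hl.le)⟩).2 ?_
          refine Or.inr (Subtype.ext ?_)
          show vn g = _
          rw [hfix' a ha', h']
  -- j(κ̂) is an ordinal
  have hordK : ((j Khat : M.toSet) : ZFSet).IsOrdinal := by
    have h1 : ordFm.Realize (M := (Vo l : Set ZFSet)) ![Khat] := by
      rw [realize_ordFm]
      constructor
      · intro w hw z hz
        exact (isOrdinal_vn κ.ord).isTransitive.mem_trans hz hw
      · intro w hw z hz y hy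
        exact (isOrdinal_vn κ.ord).mem_trans' hy hz hw
    have h2 := (j.map_formula ordFm ![Khat]).mpr h1
    rw [show j ∘ ![Khat] = ![j Khat] from by funext i; fin_cases i <;> rfl,
      realize_ordFm] at h2
    obtain ⟨ht, htr⟩ := h2
    constructor
    · intro y hy z hz
      exact ht ⟨y, hMtrans (j Khat).2 hy⟩ hy ⟨z, hMtrans (hMtrans (j Khat).2 hy) hz⟩ hz
    · intro y z w hyz hzw hwK
      have hwM : w ∈ M.toSet := hMtrans (j Khat).2 hwK
      have hzM : z ∈ M.toSet := hMtrans hwM hzw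
      have hyM : y ∈ M.toSet := hMtrans hzM hyz
      exact htr ⟨w, hwM⟩ hwK ⟨z, hzM⟩ hzw ⟨y, hyM⟩ hyz
  -- κ̂ ∈ j(κ̂)
  have hKJK : vn κ.ord ∈ ((j Khat : M.toSet) : ZFSet) := by
    have hsub : vn κ.ord ⊆ ((j Khat : M.toSet) : ZFSet) := by
      intro z hz
      obtain ⟨g, hg, rfl⟩ := mem_vn.1 hz
      exact (hjfix g hg Khat).1 (vn_mem_vn hg)
    have hle : κ.ord ≤ ((j Khat : M.toSet) : ZFSet).rank := by
      have := ZFSet.rank_mono hsub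
      rwa [rank_vn] at this
    have hne : κ.ord ≠ ((j Khat : M.toSet) : ZFSet).rank := by
      intro h
      apply hmoveK
      rw [eq_vn_rank hordK, ← h]
    have hlt : κ.ord < ((j Khat : M.toSet) : ZFSet).rank := lt_of_le_of_ne hle hne
    rw [eq_vn_rank hordK]
    exact vn_mem_vn hlt
  -- the coded sequence
  have hAl : seqCode A κ.ord ∈ Vo l := by
    refine hVo.2 (lt_of_le_of_lt ?_ hl)
    rw [ZFSet.rank_le_iff]
    intro x hx
    obtain ⟨a, ha, rfl⟩ := mem_seqCode.1 hx
    refine rank_pair_lt hksucc ?_ ?_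
    · rw [rank_vn]; exact ha
    · exact lt_of_le_of_lt rank_codeSet_le ha
  let Ahat : (Vo l : Set ZFSet) := ⟨seqCode A κ.ord, hAl⟩
  -- transfer of the sequence formula, and extraction of Ŝ
  have hseq1 : seqFm.Realize (M := (Vo l : Set ZFSet)) ![Ahat, Khat] := by
    rw [realize_seqFm]
    intro a haS haK
    obtain ⟨α, hαk, rfl⟩ := mem_vn.1 haK
    have hpra : (ZFSet.pair (vn α) (codeSet (A α) α)).rank < l := by
      refine lt_of_lt_of_le (rank_pair_lt hksucc ?_ ?_) hl.le
      · rw [rank_vn]; exact hαk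
      · exact lt_of_le_of_lt rank_codeSet_le hαk
    have hpS : ZFSet.pair (vn α) (codeSet (A α) α) ∈ Vo l := hVo.2 hpra
    refine ⟨codeSet (A α) α, ⟨ZFSet.pair (vn α) (codeSet (A α) α),
      mem_seqCode.2 ⟨α, hαk, rfl⟩, ⟨⟨{vn α}, mem_zpair.2 (Or.inl rfl),
        hVtrans hpS (mem_zpair.2 (Or.inl rfl)), fun r _ => ZFSet.mem_singleton⟩,
        ⟨{vn α, codeSet (A α) α}, mem_zpair.2 (Or.inr rfl),
          hVtrans hpS (mem_zpair.2 (Or.inr rfl)), fun r _ => ZFSet.mem_pair⟩⟩,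
      hpS, ?_⟩, ?_, fun z _ hz => codeSet_subset z hz⟩
    · intro q _ hq
      rcases mem_zpair.1 hq with rfl | rfl
      · exact Or.inl (fun r _ => ZFSet.mem_singleton)
      · exact Or.inr (fun r _ => ZFSet.mem_pair)
    · exact hVo.2 (lt_of_le_of_lt rank_codeSet_le (hαk.trans hl))
  have hseq2 := (j.map_formula seqFm ![Ahat, Khat]).mpr hseq1
  rw [show j ∘ ![Ahat, Khat] = ![j Ahat, j Khat] from by funext i; fin_cases i <;> rfl,
    realize_seqFm] at hseq2
  have hKM : vn κ.ord ∈ M.toSet := hvM hl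
  obtain ⟨Sv, ⟨p₀, hp₀A, ⟨⟨q1, hq1p, hq1S, hq1c⟩, ⟨q2, hq2p, hq2S, hq2c⟩⟩, hp₀S, hallp₀⟩,
    hSvM, hSvsub⟩ := hseq2 (vn κ.ord) hKM hKJK
  -- p₀ really is the pair (κ̂, Ŝ)
  have hp₀pair : p₀ = ZFSet.pair (vn κ.ord) Sv :=
    pair_eq_of_chars hMtrans hKM hSvM hq1p hq1S hq1c hq2p hq2S hq2c hallp₀ hp₀S
  -- Ŝ ⊆ κ̂
  have hSvsub' : ∀ z ∈ Sv, z ∈ vn κ.ord := fun z hz => hSvsub z (hMtrans hSvM hz) hz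
  have hSvl : Sv ∈ Vo l := by
    refine hVo.2 (lt_of_le_of_lt ?_ hl)
    have h := ZFSet.rank_mono (x := Sv) (y := vn κ.ord) (fun z hz => hSvsub' z hz)
    rwa [rank_vn] at h
  let Shat : (Vo l : Set ZFSet) := ⟨Sv, hSvl⟩
  -- the ineffability witness
  refine ⟨{b : Ordinal | vn b ∈ Sv}, ?_, ?_⟩
  · intro b hb
    obtain ⟨g, hg, he⟩ := mem_vn.1 (hSvsub' _ hb)
    obtain rfl := vn_injective he
    exact hg
  -- stationarity
  intro C hC
  -- Ŝ = j(Ŝ) ∩ κ̂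
  have hjS : ∀ z : ZFSet, z ∈ Sv ↔ (z ∈ ((j Shat : M.toSet) : ZFSet) ∧ z ∈ vn κ.ord) := by
    intro z
    constructor
    · intro hz
      have hzK := hSvsub' z hz
      obtain ⟨g, hg, rfl⟩ := mem_vn.1 hzK
      exact ⟨(hjfix g hg Shat).1 hz, hzK⟩
    · rintro ⟨hz1, hz2⟩
      obtain ⟨g, hg, rfl⟩ := mem_vn.1 hz2
      exact (hjfix g hg Shat).2 hz1
  -- the coded club
  have hCl : codeSet C κ.ord ∈ Vo l :=
    hVo.2 (lt_of_le_of_lt rank_codeSet_le hl)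
  let Chat : (Vo l : Set ZFSet) := ⟨codeSet C κ.ord, hCl⟩
  -- κ̂ ∈ j(Ĉ)
  have hclub1 : clubFm.Realize (M := (Vo l : Set ZFSet)) ![Chat, Khat] := by
    rw [realize_clubFm]
    intro a haS haK x hxS hxa hcl
    obtain ⟨α, hαk, rfl⟩ := mem_vn.1 haK
    have hα0 : 0 < α := by
      obtain ⟨g, hg, rfl⟩ := mem_vn.1 hxa
      exact lt_of_le_of_lt (zero_le (a := g)) hg
    have hαC : α ∈ C := by
      refine hC.2 α hαk hα0 ?_
      intro b hb
      obtain ⟨e, ⟨heC, hea⟩, heS, hbe⟩ := hcl (vn b) (hvl ((hb.trans hαk).trans hl))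
        (vn_mem_vn hb)
      obtain ⟨d, hdC, hdk, rfl⟩ := mem_codeSet.1 heC
      refine ⟨d, hdC, ?_, vn_mem_vn_iff.1 hea⟩
      rcases hbe with h | h
      · exact (vn_mem_vn_iff.1 h).le
      · exact (vn_injective h).le
    exact vn_mem_codeSet.2 ⟨hαC, hαk⟩
  have hclub2 := (j.map_formula clubFm ![Chat, Khat]).mpr hclub1
  rw [show j ∘ ![Chat, Khat] = ![j Chat, j Khat] from by funext i; fin_cases i <;> rfl,
    realize_clubFm] at hclub2
  have hKJC : vn κ.ord ∈ ((j Chat : M.toSet) : ZFSet) := by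
    refine hclub2 (vn κ.ord) hKM hKJK (vn 0) (hvM (hk0.trans hl)) (vn_mem_vn hk0) ?_
    intro b hbM hbK
    obtain ⟨g, hg, rfl⟩ := mem_vn.1 hbK
    obtain ⟨d, hdC, hgd, hdk⟩ := hC.1 g hg
    refine ⟨vn d, ⟨(hjfix d hdk Chat).1 (vn_mem_codeSet.2 ⟨hdC, hdk⟩), vn_mem_vn hdk⟩,
      hvM (hdk.trans hl), ?_⟩
    rcases lt_or_eq_of_le hgd with h | h
    · exact Or.inl (vn_mem_vn h)
    · exact Or.inr (by rw [h])
  -- the coded target set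
  have hDl : codeSet {a : Ordinal | a < κ.ord ∧ a ∈ C ∧
      {b : Ordinal | vn b ∈ Sv} ∩ Set.Iio a = A a} κ.ord ∈ Vo l :=
    hVo.2 (lt_of_le_of_lt rank_codeSet_le hl)
  let Dhat : (Vo l : Set ZFSet) := ⟨codeSet {a : Ordinal | a < κ.ord ∧ a ∈ C ∧
      {b : Ordinal | vn b ∈ Sv} ∩ Set.Iio a = A a} κ.ord, hDl⟩
  -- the key reflection
  have htheta1 : thetaFm.Realize (M := (Vo l : Set ZFSet)) ![Dhat, Chat, Ahat, Shat, Khat] := by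
    rw [realize_thetaFm]
    intro a haS haK haC y p hpA pq1 hpq1p hpq1S hpq1c pq2 hpq2p hpq2S hpq2c hpS hpall hyS hzc
    obtain ⟨α, hαk, rfl⟩ := mem_vn.1 haK
    have hαC : α ∈ C := (vn_mem_codeSet.1 haC).1
    have hppair : p = ZFSet.pair (vn α) y :=
      pair_eq_of_chars hVtrans haS hyS hpq1p hpq1S hpq1c hpq2p hpq2S hpq2c hpall hpS
    obtain ⟨α', hα'k, hp'⟩ := mem_seqCode.1 hpA
    rw [hppair] at hp'
    obtain ⟨hveq, hyeq⟩ := ZFSet.pair_injective hp'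
    obtain rfl := vn_injective hveq
    -- y = codeSet (A α) α, and also y = Ŝ ∩ vn α
    have hsets : {b : Ordinal | vn b ∈ Sv} ∩ Set.Iio α = A α := by
      ext b
      constructor
      · rintro ⟨hb1, hb2⟩
        have hbV : vn b ∈ Vo l := hvl ((hb2.trans hαk).trans hl)
        have : vn b ∈ y := (hzc (vn b) hbV).2 ⟨hb1, vn_mem_vn hb2⟩
        rw [hyeq] at this
        exact (vn_mem_codeSet.1 this).1
      · intro hb
        have hbα : b < α := hA α hαk hb
        have hby : vn b ∈ y := by
          rw [hyeq]
          exact vn_mem_codeSet.2 ⟨hb, hbα⟩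
        have hbV : vn b ∈ Vo l := hvl ((hbα.trans hαk).trans hl)
        obtain ⟨h1, h2⟩ := (hzc (vn b) hbV).1 hby
        exact ⟨h1, vn_mem_vn_iff.1 h2⟩
    exact vn_mem_codeSet.2 ⟨⟨hαk, hαC, hsets⟩, hαk⟩
  have htheta2 := (j.map_formula thetaFm ![Dhat, Chat, Ahat, Shat, Khat]).mpr htheta1
  rw [show j ∘ ![Dhat, Chat, Ahat, Shat, Khat] =
      ![j Dhat, j Chat, j Ahat, j Shat, j Khat] from by funext i; fin_cases i <;> rfl,
    realize_thetaFm] at htheta2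
  -- κ̂ ∈ j(D̂)
  have hq1M : ({vn κ.ord} : ZFSet) ∈ M.toSet := by
    rw [hp₀pair] at hp₀S
    exact hMtrans hp₀S (mem_zpair.2 (Or.inl rfl))
  have hq2M : ({vn κ.ord, Sv} : ZFSet) ∈ M.toSet := by
    rw [hp₀pair] at hp₀S
    exact hMtrans hp₀S (mem_zpair.2 (Or.inr rfl))
  have hKJD : vn κ.ord ∈ ((j Dhat : M.toSet) : ZFSet) := by
    refine htheta2 (vn κ.ord) hKM hKJK hKJC Sv p₀ hp₀A ({vn κ.ord}) ?_ hq1M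
      (fun r _ => ZFSet.mem_singleton) ({vn κ.ord, Sv}) ?_ hq2M
      (fun r _ => ZFSet.mem_pair) hp₀S ?_ hSvM ?_
    · rw [hp₀pair]; exact mem_zpair.2 (Or.inl rfl)
    · rw [hp₀pair]; exact mem_zpair.2 (Or.inr rfl)
    · intro q _ hq
      rw [hp₀pair] at hq
      rcases mem_zpair.1 hq with rfl | rfl
      · exact Or.inl (fun r _ => ZFSet.mem_singleton)
      · exact Or.inr (fun r _ => ZFSet.mem_pair)
    · intro z _
      exact hjS z
  -- transfer nonemptiness back
  have hne1 : neFm.Realize (M := (M.toSet : Set ZFSet)) ![j Dhat] :=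
    (realize_neFm _).2 ⟨⟨vn κ.ord, hKM⟩, hKJD⟩
  have hne2 : neFm.Realize (M := (Vo l : Set ZFSet)) ![Dhat] := by
    have h := j.map_formula neFm ![Dhat]
    rw [show j ∘ ![Dhat] = ![j Dhat] from by funext i; fin_cases i <;> rfl] at h
    exact h.1 hne1
  rw [realize_neFm] at hne2
  obtain ⟨b, hb⟩ := hne2
  obtain ⟨d, ⟨hd1, hd2, hd3⟩, _, _⟩ := mem_codeSet.1 hb
  exact ⟨d, ⟨hd1, hd3⟩, hd2⟩
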